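/- arXiv:1805.02166 — 3 statements merged into one kernel-verified Lean document; each statement's English description precedes it below -/
import Mathlib

section
/- Let q be a prime power and R = F_q[x]/K a quotient of F_q[x] by a nonzero proper ideal K. Then the Erdős–Burgess constant of the multiplicative semigroup S_R of R satisfies I(S_R) ≥ D(U(S_R)) + Ω(K) − ω(K), where Ω(K) is the number of prime ideals counted with multiplicity and ω(K) the number of distinct prime ideals in the factorization of K. -/
lemma my_le_add_decomp {M : Type*} [DecidableEq M] {W A B : Multiset M} (h : W ≤ A + B) :
    ∃ W₁ W₂, W₁ ≤ A ∧ W₂ ≤ B ∧ W = W₁ + W₂ := by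
  refine ⟨W ∩ A, W - A, Multiset.inter_le_right, ?_, ?_⟩
  · rw [Multiset.sub_le_iff_le_add]; rwa [add_comm]
  · rw [add_comm, Multiset.sub_add_inter]

lemma my_exists_of_le_map {α β : Type*} (f : α → β) (hf : Function.Injective f)
    {W : Multiset β} {s : Multiset α} (h : W ≤ s.map f) :
    ∃ W', W' ≤ s ∧ W = W'.map f := by
  classical
  induction W using Multiset.induction generalizing s with
  | empty => exact ⟨0, zero_le, rfl⟩
  | cons b W0 ih =>
    have hb : b ∈ s.map f := Multiset.mem_of_le h (Multiset.mem_cons_self _ _)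
    obtain ⟨a, ha, rfl⟩ := Multiset.mem_map.mp hb
    have h0 : W0 ≤ (s.erase a).map f := by
      have := Multiset.erase_le_erase (f a) h
      rwa [Multiset.erase_cons_head, ← Multiset.map_erase f hf a s] at this
    obtain ⟨W0', hle, rfl⟩ := ih h0
    refine ⟨a ::ₘ W0', ?_, by simp⟩
    calc a ::ₘ W0' ≤ a ::ₘ s.erase a := Multiset.cons_le_cons a hle
    _ = s := Multiset.cons_erase ha

lemma my_le_sum_replicate {ι M : Type*} (s : Finset ι) (a : ι → M) (m : ι → ℕ)
    (W : Multiset M) (h : W ≤ ∑ i ∈ s, Multiset.replicate (m i) (a i)) :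
    ∃ k : ι → ℕ, (∀ i, k i ≤ m i) ∧ W = ∑ i ∈ s, Multiset.replicate (k i) (a i) := by
  classical
  induction s using Finset.cons_induction generalizing W with
  | empty =>
    simp only [Finset.sum_empty, Multiset.le_zero] at h
    exact ⟨fun _ => 0, fun _ => Nat.zero_le _, by simp [h]⟩
  | cons j t hj ih =>
    rw [Finset.sum_cons] at h
    obtain ⟨W₁, W₂, h₁, h₂, rfl⟩ := my_le_add_decomp h
    obtain ⟨k', hk', rfl⟩ := ih W₂ h₂
    have hW₁ : W₁ = Multiset.replicate (Multiset.card W₁) (a j) :=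
      Multiset.eq_replicate_card.mpr fun b hb =>
        Multiset.eq_of_mem_replicate (Multiset.mem_of_le h₁ hb)
    have hcard : Multiset.card W₁ ≤ m j := by
      have := Multiset.card_le_card h₁
      simpa using this
    refine ⟨Function.update k' j (Multiset.card W₁), fun i => ?_, ?_⟩
    · by_cases hi : i = j
      · subst hi; simpa using hcard
      · simpa [Function.update_of_ne hi] using hk' i
    · rw [Finset.sum_cons, Function.update_self]
      rw [← hW₁]
      congr 1
      exact Finset.sum_congr rfl fun i hi => by
        rw [Function.update_of_ne (ne_of_mem_of_not_mem hi hj)]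

lemma my_card_sum {ι M : Type*} (s : Finset ι) (g : ι → Multiset M) :
    Multiset.card (∑ i ∈ s, g i) = ∑ i ∈ s, Multiset.card (g i) := by
  classical
  induction s using Finset.cons_induction with
  | empty => simp
  | cons j t hj ih => simp [Finset.sum_cons, ih]

/-- A sequence (multiset) over a commutative monoid is idempotent-product free if no nonempty
subsequence has an idempotent product. -/
def IdemProdFree {M : Type*} [CommMonoid M] (T : Multiset M) : Prop :=
  ∀ W ≤ T, W ≠ 0 → ¬ IsIdempotentElem W.prod

/-- The Erdős–Burgess constant of a commutative monoid: the least ℓ ∈ ℕ ∪ {∞} such that every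
sequence of length at least ℓ is not idempotent-product free. -/
noncomputable def ErdosBurgess (M : Type*) [CommMonoid M] : ℕ∞ :=
  sInf {ℓ : ℕ∞ | ∀ T : Multiset M, ℓ ≤ (Multiset.card T : ℕ∞) → ¬ IdemProdFree T}

/-- The Davenport constant of a finite abelian group. -/
noncomputable def Davenport (G : Type*) [CommGroup G] : ℕ :=
  sInf {ℓ : ℕ | ∀ T : Multiset G, ℓ ≤ Multiset.card T →
    ∃ W ≤ T, W ≠ 0 ∧ W.prod = 1}

/-- I(S_R) ≥ D(U(S_R)) + Ω(K) - ω(K) for R = F_q[x]/K, K a nonzero proper ideal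
with K = (f), f = ∏ p_i^{n_i}, so Ω(K) = ∑ n_i and ω(K) = r. -/
theorem erdosBurgess_lower_bound
    (F : Type*) [Field F] [Fintype F]
    (r : ℕ) (hr : 1 ≤ r)
    (p : Fin r → Polynomial F) (n : Fin r → ℕ)
    (hirr : ∀ i, Irreducible (p i))
    (hass : ∀ i j, i ≠ j → ¬ Associated (p i) (p j))
    (hn : ∀ i, 1 ≤ n i)
    (f : Polynomial F) (hf : f = ∏ i, p i ^ n i)
    (K : Ideal (Polynomial F)) (hK : K = Ideal.span {f}) :
    ((Davenport (Polynomial F ⧸ K)ˣ + (∑ i, n i) - r : ℕ) : ℕ∞) ≤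
      ErdosBurgess (Polynomial F ⧸ K) := by
  classical
  -- Step 1: a product-one free sequence of units of length ≥ D - 1
  obtain ⟨S, hScard, hSfree⟩ :
      ∃ S : Multiset (Polynomial F ⧸ K)ˣ,
        Davenport (Polynomial F ⧸ K)ˣ - 1 ≤ Multiset.card S ∧
        ∀ W ≤ S, W ≠ 0 → W.prod ≠ 1 := by
    rcases Nat.eq_zero_or_pos (Davenport (Polynomial F ⧸ K)ˣ) with h0 | hpos
    · exact ⟨0, by omega, fun W hW hne => absurd (Multiset.le_zero.mp hW) hne⟩
    · by_contra hcon
      push_neg at hcon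
      have hmem : Davenport (Polynomial F ⧸ K)ˣ - 1 ∈
          {ℓ : ℕ | ∀ T : Multiset (Polynomial F ⧸ K)ˣ, ℓ ≤ Multiset.card T →
            ∃ W ≤ T, W ≠ 0 ∧ W.prod = 1} := by
        intro T hT
        obtain ⟨W, hW, hne, hprod⟩ := hcon T hT
        exact ⟨W, hW, hne, hprod⟩
      have hle : Davenport (Polynomial F ⧸ K)ˣ ≤ Davenport (Polynomial F ⧸ K)ˣ - 1 :=
        Nat.sInf_le hmem
      omega
  -- The sequence T0
  set π : Fin r → Polynomial F ⧸ K := fun i => Ideal.Quotient.mk K (p i) with hπ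
  set M0 : Multiset (Polynomial F ⧸ K) := ∑ i, Multiset.replicate (n i - 1) (π i) with hM0
  set T0 : Multiset (Polynomial F ⧸ K) :=
    S.map (Units.val : (Polynomial F ⧸ K)ˣ → Polynomial F ⧸ K) + M0 with hT0
  have hM0card : Multiset.card M0 = ∑ i, (n i - 1) := by
    rw [hM0, my_card_sum]
    simp
  have hT0card : Multiset.card T0 = Multiset.card S + ∑ i, (n i - 1) := by
    rw [hT0, Multiset.card_add, Multiset.card_map, hM0card]
  -- Step 2: T0 is idempotent-product free
  have hfree : IdemProdFree T0 := by
    intro W hW hWne hidem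
    rw [hT0] at hW
    obtain ⟨W₁, W₂, h₁, h₂, hWeq⟩ := my_le_add_decomp hW
    obtain ⟨Wu, hWu, hWu1⟩ := my_exists_of_le_map _ Units.val_injective h₁
    obtain ⟨k, hk, hW₂⟩ := my_le_sum_replicate _ _ _ _ h₂
    set u : (Polynomial F ⧸ K)ˣ := Wu.prod with hu
    set h : Polynomial F := ∏ i, p i ^ k i with hh
    have hW₁prod : W₁.prod = (u : Polynomial F ⧸ K) := by
      rw [hWu1, hu]
      exact Multiset.prod_hom Wu (Units.coeHom (Polynomial F ⧸ K))
    have hW₂prod : W₂.prod = Ideal.Quotient.mk K h := by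
      rw [hW₂, Multiset.prod_sum, hh, map_prod]
      exact Finset.prod_congr rfl fun i _ => by
        rw [Multiset.prod_replicate, hπ, map_pow]
    have hWprod : W.prod = (u : Polynomial F ⧸ K) * Ideal.Quotient.mk K h := by
      rw [hWeq, Multiset.prod_add, hW₁prod, hW₂prod]
    have he : ((u : Polynomial F ⧸ K) * Ideal.Quotient.mk K h) *
        ((u : Polynomial F ⧸ K) * Ideal.Quotient.mk K h) =
        (u : Polynomial F ⧸ K) * Ideal.Quotient.mk K h := by
      rw [← hWprod]; exact hidem
    have key : (u : Polynomial F ⧸ K) * (Ideal.Quotient.mk K h) ^ 2 =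
        Ideal.Quotient.mk K h := by
      have h2 : (u : Polynomial F ⧸ K) *
          ((u : Polynomial F ⧸ K) * (Ideal.Quotient.mk K h) ^ 2) =
          (u : Polynomial F ⧸ K) * Ideal.Quotient.mk K h := by
        rw [← he]; ring
      exact (Units.mul_right_inj u).mp h2
    obtain ⟨w, hw⟩ := Ideal.Quotient.mk_surjective (I := K) (u : Polynomial F ⧸ K)
    have hdvd : f ∣ h * (w * h - 1) := by
      rw [← Ideal.mem_span_singleton, ← hK, ← Ideal.Quotient.eq_zero_iff_mem]
      have : Ideal.Quotient.mk K (h * (w * h - 1)) =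
          (u : Polynomial F ⧸ K) * (Ideal.Quotient.mk K h) ^ 2 - Ideal.Quotient.mk K h := by
        rw [map_mul, map_sub, map_mul, map_one, hw]; ring
      rw [this, key, sub_self]
    have hk0 : ∀ i, k i = 0 := by
      intro i
      by_contra hki
      have hp : Prime (p i) := UniqueFactorizationMonoid.irreducible_iff_prime.mp (hirr i)
      have hpi_dvd_h : p i ∣ h := by
        rw [hh]
        exact dvd_trans (dvd_pow_self (p i) hki) (Finset.dvd_prod_of_mem _ (Finset.mem_univ i))
      have hnd : ¬ p i ∣ (w * h - 1) := by
        intro hd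
        have h1 : p i ∣ w * h := hpi_dvd_h.mul_left w
        have : p i ∣ 1 := by
          have := dvd_sub h1 hd
          simpa using this
        exact hp.not_unit (isUnit_of_dvd_one this)
      have hfn : p i ^ n i ∣ f := hf ▸ Finset.dvd_prod_of_mem _ (Finset.mem_univ i)
      have h1 : p i ^ n i ∣ h * (w * h - 1) := hfn.trans hdvd
      have h2 : p i ^ n i ∣ h := hp.pow_dvd_of_dvd_mul_right _ hnd h1
      have hsplit : h = p i ^ k i * ∏ j ∈ Finset.univ.erase i, p j ^ k j := by
        rw [hh, ← Finset.mul_prod_erase Finset.univ _ (Finset.mem_univ i)]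
      have hnd2 : ¬ p i ∣ ∏ j ∈ Finset.univ.erase i, p j ^ k j := by
        rw [hp.dvd_finset_prod_iff]
        rintro ⟨j, hj, hdj⟩
        have hne : i ≠ j := (Finset.ne_of_mem_erase hj).symm
        have hdvdj : p i ∣ p j := hp.dvd_of_dvd_pow hdj
        exact hass i j hne ((hirr i).associated_of_dvd (hirr j) hdvdj)
      have h3 : p i ^ n i ∣ p i ^ k i := by
        rw [hsplit, mul_comm] at h2
        exact hp.pow_dvd_of_dvd_mul_left _ hnd2 h2
      have hle : n i ≤ k i := (pow_dvd_pow_iff hp.ne_zero hp.not_unit).mp h3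
      have := hk i
      have := hn i
      omega
    have hh1 : h = 1 := by
      rw [hh]
      exact Finset.prod_eq_one fun i _ => by rw [hk0 i, pow_zero]
    have hW₂0 : W₂ = 0 := by
      rw [hW₂]
      exact Finset.sum_eq_zero fun i _ => by rw [hk0 i, Multiset.replicate_zero]
    have hWprod1 : W.prod = (u : Polynomial F ⧸ K) := by
      rw [hWprod, hh1, map_one, mul_one]
    have huu : u * u = u := by
      have h' : (u : Polynomial F ⧸ K) * u = u := by rw [← hWprod1]; exact hidem
      exact Units.ext (by rw [Units.val_mul]; exact h')
    have hu1 : u = 1 := mul_eq_right.mp huu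
    have hWune : Wu ≠ 0 := by
      intro h0
      apply hWne
      rw [hWeq, hW₂0, hWu1, h0]
      simp
    exact hSfree Wu hWu hWune (hu ▸ hu1)
  -- Step 3: conclude
  have hrs : r ≤ ∑ i, n i := by
    calc r = ∑ _i : Fin r, 1 := by simp
    _ ≤ ∑ i, n i := Finset.sum_le_sum fun i _ => hn i
  have hsum1 : ∑ i, (n i - 1) + r = ∑ i, n i := by
    have : ∑ i, (n i - 1) + ∑ _i : Fin r, 1 = ∑ i, ((n i - 1) + 1) :=
      (Finset.sum_add_distrib).symm
    simp only [Finset.sum_const, Finset.card_univ, Fintype.card_fin, smul_eq_mul, mul_one] at this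
    rw [this]
    exact Finset.sum_congr rfl fun i _ => by have := hn i; omega
  rw [ErdosBurgess]
  refine le_sInf fun b hb => ?_
  by_contra hlt
  push_neg at hlt
  lift b to ℕ using hlt.ne_top
  have hb' : b < Davenport (Polynomial F ⧸ K)ˣ + (∑ i, n i) - r := by exact_mod_cast hlt
  have hcard : b ≤ Multiset.card T0 := by
    rw [hT0card]
    omega
  exact hb T0 (by exact_mod_cast hcard) hfree
end

section
/- Let q be a prime power, p ∈ F_q[x] irreducible, n ≥ 1, and R = F_q[x]/(pⁿ). Then every sequence over the multiplicative semigroup S_R of length D(U(S_R)) + n − 1 contains a nonempty subsequence whose product is an idempotent of R; consequently I(S_R) = D(U(S_R)) + n − 1. -/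
theorem pigeon {G : Type*} [CommGroup G] [Finite G] (T : Multiset G)
    (hT : Nat.card G ≤ Multiset.card T) : ∃ W ≤ T, W ≠ 0 ∧ W.prod = 1 := by
  classical
  have := Fintype.ofFinite G
  obtain ⟨L, hL⟩ : ∃ L : List G, (L : Multiset G) = T := ⟨T.toList, Multiset.coe_toList T⟩
  have hlen : Nat.card G ≤ L.length := by
    have h := congrArg Multiset.card hL
    simp at h
    omega
  have hninj : ¬ Function.Injective (fun i : Fin (Nat.card G + 1) => (L.take i).prod) := by
    intro hinj
    have := Fintype.card_le_of_injective _ hinj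
    simp [Nat.card_eq_fintype_card] at this
  rw [Function.not_injective_iff] at hninj
  obtain ⟨i, j, hij, hne⟩ := hninj
  wlog hlt : (i : ℕ) < (j : ℕ) generalizing i j
  · have hvne : (i : ℕ) ≠ (j : ℕ) := fun h => hne (Fin.ext h)
    exact this j i hij.symm hne.symm (by omega)
  have hsplit : L.take (j : ℕ) = L.take (i : ℕ) ++ (L.take (j : ℕ)).drop (i : ℕ) := by
    conv_lhs => rw [← List.take_append_drop (i : ℕ) (L.take (j : ℕ))]
    rw [List.take_take, min_eq_left hlt.le]
  have h1 : (L.take (i : ℕ)).prod * ((L.take (j : ℕ)).drop (i : ℕ)).prod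
      = (L.take (j : ℕ)).prod := by
    conv_rhs => rw [hsplit]
    rw [List.prod_append]
  have hprodseg : ((L.take (j : ℕ)).drop (i : ℕ)).prod = 1 :=
    mul_left_cancel (h1.trans (hij.symm.trans (mul_one _).symm))
  have hjlen : (j : ℕ) ≤ L.length := le_trans (Nat.lt_succ_iff.mp j.isLt) hlen
  have hsegne : (L.take (j : ℕ)).drop (i : ℕ) ≠ [] := by
    intro h
    have := congrArg List.length h
    simp [List.length_drop, List.length_take] at this
    omega
  refine ⟨(((L.take (j : ℕ)).drop (i : ℕ) : List G) : Multiset G), ?_,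
    by simpa using hsegne, by simpa using hprodseg⟩
  have hsub : List.Sublist ((L.take (j : ℕ)).drop (i : ℕ)) L :=
    ((List.drop_sublist _ _)).trans (List.take_sublist _ _)
  calc ((((L.take (j : ℕ)).drop (i : ℕ)) : List G) : Multiset G)
      ≤ (L : Multiset G) := Multiset.coe_le.mpr hsub.subperm
    _ = T := hL


namespace EBaux

theorem exists_le_card {α : Type*} (S : Multiset α) (k : ℕ) (h : k ≤ Multiset.card S) :
    ∃ W ≤ S, Multiset.card W = k := by
  refine ⟨((S.toList.take k : List α) : Multiset α), ?_, ?_⟩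
  · calc ((S.toList.take k : List α) : Multiset α) ≤ (S.toList : Multiset α) :=
        Multiset.coe_le.mpr (List.take_sublist _ _).subperm
      _ = S := Multiset.coe_toList S
  · simp only [Multiset.coe_card, List.length_take]
    have : Multiset.card S = S.toList.length := by simp
    omega

variable {F : Type*} [Field F] {p : Polynomial F} (hirr : Irreducible p) {n : ℕ} (hn : 1 ≤ n)

theorem mk_eq_zero (f : Polynomial F) :
    Ideal.Quotient.mk (Ideal.span {p ^ n}) f = 0 ↔ p ^ n ∣ f := by
  rw [Ideal.Quotient.eq_zero_iff_mem, Ideal.mem_span_singleton]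

include hirr hn in
theorem isUnit_mk_iff (f : Polynomial F) :
    IsUnit (Ideal.Quotient.mk (Ideal.span {p ^ n}) f) ↔ ¬ p ∣ f := by
  constructor
  · rintro ⟨u, hu⟩ hdvd
    obtain ⟨g, hg⟩ := Ideal.Quotient.mk_surjective
      (↑u⁻¹ : Polynomial F ⧸ Ideal.span {p ^ n})
    have h0 : (Ideal.Quotient.mk (Ideal.span {p ^ n})) (f * g - 1) = 0 := by
      rw [map_sub, map_mul, ← hu, hg, map_one, Units.mul_inv, sub_self]
    have h1 : p ∣ f * g - 1 := dvd_trans (dvd_pow_self p (by omega)) ((mk_eq_zero _).mp h0)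
    have h2 : p ∣ (1 : Polynomial F) := by
      have h3 : p ∣ f * g := hdvd.mul_right g
      have := dvd_sub h3 h1
      simpa using this
    exact hirr.not_isUnit (isUnit_of_dvd_one h2)
  · intro hnd
    have hc : IsCoprime p f := (hirr.coprime_iff_not_dvd).mpr hnd
    obtain ⟨a, b, hab⟩ := (hc.pow_left : IsCoprime (p ^ n) f)
    refine IsUnit.of_mul_eq_one (Ideal.Quotient.mk _ b) ?_
    have h := congrArg (Ideal.Quotient.mk (Ideal.span {p ^ n})) hab
    rw [map_add, map_mul, map_mul, map_one, (mk_eq_zero (p ^ n)).mpr dvd_rfl] at h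
    rw [mul_comm]
    simpa using h

include hirr hn in
theorem nonunit_dvd {x : Polynomial F ⧸ Ideal.span {p ^ n}} (hx : ¬ IsUnit x) :
    Ideal.Quotient.mk (Ideal.span {p ^ n}) p ∣ x := by
  obtain ⟨f, rfl⟩ := Ideal.Quotient.mk_surjective x
  have : p ∣ f := by
    by_contra h
    exact hx ((isUnit_mk_iff hirr hn f).mpr h)
  obtain ⟨g, rfl⟩ := this
  exact ⟨Ideal.Quotient.mk _ g, (map_mul _ _ _)⟩

include hirr in
theorem mkp_pow_ne_zero {k : ℕ} (hk : k < n) :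
    (Ideal.Quotient.mk (Ideal.span {p ^ n}) p) ^ k ≠ 0 := by
  intro h0
  rw [← map_pow, mk_eq_zero] at h0
  rename_i hdvd0
  have hdvd := h0
  have := (pow_dvd_pow_iff hirr.ne_zero hirr.not_isUnit).mp hdvd
  omega

theorem mkp_pow_n : (Ideal.Quotient.mk (Ideal.span {p ^ n}) p) ^ n = 0 := by
  rw [← map_pow, mk_eq_zero]

include hirr hn in
theorem not_isUnit_mkp : ¬ IsUnit (Ideal.Quotient.mk (Ideal.span {p ^ n}) p) := by
  rw [isUnit_mk_iff hirr hn]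
  simp

include hirr in
omit hn in
theorem idem_eq (e : Polynomial F ⧸ Ideal.span {p ^ n}) (he : IsIdempotentElem e) :
    e = 0 ∨ e = 1 := by
  obtain ⟨f, rfl⟩ := Ideal.Quotient.mk_surjective e
  have hdvd : p ^ n ∣ f * (f - 1) := by
    rw [← mk_eq_zero]
    have : (Ideal.Quotient.mk (Ideal.span {p ^ n})) f *
        (Ideal.Quotient.mk (Ideal.span {p ^ n})) f =
        (Ideal.Quotient.mk (Ideal.span {p ^ n})) f := he
    rw [map_mul, map_sub, map_one, mul_sub, mul_one, this, sub_self]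
  by_cases hd : p ∣ f
  · left
    have hnd : ¬ p ∣ (f - 1) := by
      intro h
      have : p ∣ (1 : Polynomial F) := by
        have := dvd_sub hd h
        simpa using this
      exact hirr.not_isUnit (isUnit_of_dvd_one this)
    have hc : IsCoprime (p ^ n) (f - 1) := ((hirr.coprime_iff_not_dvd).mpr hnd).pow_left
    rw [mk_eq_zero]
    exact hc.dvd_of_dvd_mul_right hdvd
  · right
    have hc : IsCoprime (p ^ n) f := ((hirr.coprime_iff_not_dvd).mpr hd).pow_left
    have : p ^ n ∣ f - 1 := hc.dvd_of_dvd_mul_left hdvd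
    have h0 : (Ideal.Quotient.mk (Ideal.span {p ^ n})) (f - 1) = 0 := (mk_eq_zero _).mpr this
    rw [map_sub, map_one, sub_eq_zero] at h0
    exact h0

include hirr hn in
theorem prod_nonunits (S : Multiset (Polynomial F ⧸ Ideal.span {p ^ n}))
    (h : ∀ x ∈ S, ¬ IsUnit x) (hcard : n ≤ Multiset.card S) : S.prod = 0 := by
  have key : ∀ S : Multiset (Polynomial F ⧸ Ideal.span {p ^ n}), (∀ x ∈ S, ¬ IsUnit x) →
      (Ideal.Quotient.mk (Ideal.span {p ^ n}) p) ^ (Multiset.card S) ∣ S.prod := by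
    intro S
    induction S using Multiset.induction with
    | empty => simp
    | cons a s ih =>
      intro hmem
      rw [Multiset.prod_cons, Multiset.card_cons, pow_succ, mul_comm (_ ^ _) _]
      exact mul_dvd_mul (nonunit_dvd hirr hn (hmem a (Multiset.mem_cons_self a s)))
        (ih fun x hx => hmem x (Multiset.mem_cons_of_mem hx))
  obtain ⟨c, hc⟩ := key S h
  rw [hc]
  have : (Ideal.Quotient.mk (Ideal.span {p ^ n}) p) ^ (Multiset.card S) = 0 := by
    calc (Ideal.Quotient.mk (Ideal.span {p ^ n}) p) ^ (Multiset.card S)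
        = (Ideal.Quotient.mk (Ideal.span {p ^ n}) p) ^ n *
          (Ideal.Quotient.mk (Ideal.span {p ^ n}) p) ^ (Multiset.card S - n) := by
          rw [← pow_add]; congr 1; omega
      _ = 0 := by rw [mkp_pow_n]; exact zero_mul _
  rw [this, zero_mul]

end EBaux

/-- for R = F_q[x]/(pⁿ), every sequence of length D(U(R)) + n - 1 has a nonempty
subsequence with idempotent product, and I(S_R) = D(U(S_R)) + n - 1. -/
theorem erdosBurgess_prime_power
    (F : Type*) [Field F] [Fintype F]
    (p : Polynomial F) (hirr : Irreducible p)
    (n : ℕ) (hn : 1 ≤ n) :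
    (∀ T : Multiset (Polynomial F ⧸ Ideal.span {p ^ n}),
      Multiset.card T = Davenport (Polynomial F ⧸ Ideal.span {p ^ n})ˣ + n - 1 →
      ∃ W ≤ T, W ≠ 0 ∧ IsIdempotentElem W.prod) ∧
    ErdosBurgess (Polynomial F ⧸ Ideal.span {p ^ n}) =
      ((Davenport (Polynomial F ⧸ Ideal.span {p ^ n})ˣ + n - 1 : ℕ) : ℕ∞) := by
  classical
  have hpn0 : p ^ n ≠ 0 := pow_ne_zero n hirr.ne_zero
  have hfinA : Module.Finite F (AdjoinRoot (p ^ n)) := (AdjoinRoot.powerBasis hpn0).finite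
  have hfin : Finite (Polynomial F ⧸ Ideal.span {p ^ n}) :=
    Module.finite_of_finite (M := AdjoinRoot (p ^ n)) F
  have hfinU : Finite (Polynomial F ⧸ Ideal.span {p ^ n})ˣ := inferInstance
  set DS := {ℓ : ℕ | ∀ T : Multiset (Polynomial F ⧸ Ideal.span {p ^ n})ˣ,
    ℓ ≤ Multiset.card T → ∃ W ≤ T, W ≠ 0 ∧ W.prod = 1} with hDS
  have hDSne : DS.Nonempty :=
    ⟨Nat.card (Polynomial F ⧸ Ideal.span {p ^ n})ˣ, fun T hT => pigeon T hT⟩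
  set D := Davenport (Polynomial F ⧸ Ideal.span {p ^ n})ˣ with hD
  have hDdef : D = sInf DS := rfl
  have hDmem : D ∈ DS := hDdef ▸ Nat.sInf_mem hDSne
  -- Part 1
  have part1 : ∀ T : Multiset (Polynomial F ⧸ Ideal.span {p ^ n}),
      D + n - 1 ≤ Multiset.card T →
      ∃ W ≤ T, W ≠ 0 ∧ IsIdempotentElem W.prod := by
    intro T hT
    by_cases hc : n ≤ Multiset.card (T.filter (fun x => ¬ IsUnit x))
    · obtain ⟨W, hWle, hWcard⟩ := EBaux.exists_le_card _ n hc
      refine ⟨W, le_trans hWle (Multiset.filter_le _ _), ?_, ?_⟩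
      · intro h
        rw [h] at hWcard
        simp at hWcard
        omega
      · have hz : W.prod = 0 := EBaux.prod_nonunits hirr hn W
          (fun x hx => Multiset.of_mem_filter (p := fun x => ¬ IsUnit x) (Multiset.mem_of_le hWle hx)) (by omega)
        rw [hz]
        exact IsIdempotentElem.zero
    · have hsum : Multiset.card (T.filter IsUnit) +
          Multiset.card (T.filter (fun x => ¬ IsUnit x)) = Multiset.card T := by
        rw [← Multiset.card_add, Multiset.filter_add_not]
      have hDle : D ≤ Multiset.card (T.filter IsUnit) := by omega
      set Tu := T.filter IsUnit with hTu
      let V : Multiset (Polynomial F ⧸ Ideal.span {p ^ n})ˣ :=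
        Tu.attach.map (fun x => (Multiset.of_mem_filter x.2 : IsUnit x.1).unit)
      have hVmap : V.map (Units.coeHom (Polynomial F ⧸ Ideal.span {p ^ n})) = Tu := by
        show (Tu.attach.map _).map _ = Tu
        rw [Multiset.map_map]
        simp only [Function.comp_def, Units.coeHom_apply, IsUnit.unit_spec]
        exact Multiset.attach_map_val Tu
      have hVcard : Multiset.card V = Multiset.card Tu := by
        show Multiset.card (Tu.attach.map _) = _
        rw [Multiset.card_map, Multiset.card_attach]
      obtain ⟨W', hW'le, hW'ne, hW'prod⟩ := hDmem V (by omega)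
      refine ⟨W'.map (Units.coeHom (Polynomial F ⧸ Ideal.span {p ^ n})), ?_, ?_, ?_⟩
      · calc W'.map (Units.coeHom (Polynomial F ⧸ Ideal.span {p ^ n}))
            ≤ V.map (Units.coeHom (Polynomial F ⧸ Ideal.span {p ^ n})) :=
              Multiset.map_le_map hW'le
          _ = Tu := hVmap
          _ ≤ T := Multiset.filter_le _ _
      · simpa [Multiset.map_eq_zero] using hW'ne
      · have := Multiset.prod_hom W' (Units.coeHom (Polynomial F ⧸ Ideal.span {p ^ n}))
        rw [this, hW'prod]
        simpa using IsIdempotentElem.one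
  -- lower-bound counterexample
  have hD1 : 1 ≤ D := by
    rcases Nat.eq_zero_or_pos D with h0 | h
    · exfalso
      have hm := hDmem
      rw [h0] at hm
      obtain ⟨W, hW, hWne, _⟩ := hm 0 (by simp)
      exact hWne (Multiset.le_zero.mp hW)
    · exact h
  have hnotin : D - 1 ∉ DS := by
    rw [hDdef] at hD1 ⊢
    exact Nat.notMem_of_lt_sInf (by omega)
  rw [hDS, Set.mem_setOf_eq] at hnotin
  push_neg at hnotin
  obtain ⟨T₀, hT₀card, hT₀⟩ := hnotin
  obtain ⟨S₀, hS₀le, hS₀card⟩ := EBaux.exists_le_card T₀ (D - 1) hT₀card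
  set π := Ideal.Quotient.mk (Ideal.span {p ^ n}) p with hπ
  set T₁ := S₀.map (Units.coeHom (Polynomial F ⧸ Ideal.span {p ^ n})) +
    Multiset.replicate (n - 1) π with hT₁
  have hT₁card : Multiset.card T₁ = D + n - 2 := by
    rw [hT₁, Multiset.card_add, Multiset.card_map, Multiset.card_replicate, hS₀card]
    omega
  have freeT₁ : IdemProdFree T₁ := by
    intro W hWle hWne hidem
    set Wu := W.filter IsUnit with hWu
    set Wp := W.filter (fun x => ¬ IsUnit x) with hWp
    have hsplit : Wu + Wp = W := Multiset.filter_add_not _ _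
    have hWpelem : ∀ x ∈ Wp, x = π := by
      intro x hx
      have hxnu : ¬ IsUnit x := Multiset.of_mem_filter (p := fun x => ¬ IsUnit x) hx
      have hxW : x ∈ W := Multiset.mem_of_le (Multiset.filter_le _ _) hx
      have hxT : x ∈ T₁ := Multiset.mem_of_le hWle hxW
      rw [hT₁, Multiset.mem_add] at hxT
      rcases hxT with hxm | hxr
      · exfalso
        obtain ⟨u, _, rfl⟩ := Multiset.mem_map.mp hxm
        exact hxnu u.isUnit
      · exact Multiset.eq_of_mem_replicate hxr
    have hWprep : Wp = Multiset.replicate (Multiset.card Wp) π :=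
      Multiset.eq_replicate_card.mpr hWpelem
    have hπnu : ¬ IsUnit π := EBaux.not_isUnit_mkp hirr hn
    have hk : Multiset.card Wp ≤ n - 1 := by
      have h1 : Multiset.count π Wp = Multiset.card Wp := by
        conv_lhs => rw [hWprep]
        rw [Multiset.count_replicate_self]
      have h2 : Multiset.count π Wp ≤ Multiset.count π T₁ :=
        Multiset.count_le_of_le π (le_trans (Multiset.filter_le _ _) hWle)
      have h3 : Multiset.count π T₁ = n - 1 := by
        rw [hT₁, Multiset.count_add, Multiset.count_replicate_self]
        have : Multiset.count π (S₀.map (Units.coeHom (Polynomial F ⧸ Ideal.span {p ^ n})))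
            = 0 := by
          rw [Multiset.count_eq_zero]
          intro hmem
          obtain ⟨u, _, hu⟩ := Multiset.mem_map.mp hmem
          exact hπnu (hu ▸ u.isUnit)
        omega
      omega
    have hu : IsUnit Wu.prod :=
      Multiset.prod_induction _ _ (fun a b ha hb => ha.mul hb) isUnit_one
        (fun a ha => Multiset.of_mem_filter ha)
    have hprodW : W.prod = Wu.prod * π ^ (Multiset.card Wp) := by
      conv_lhs => rw [← hsplit]
      rw [Multiset.prod_add]
      congr 1
      conv_lhs => rw [hWprep]
      rw [Multiset.prod_replicate]
    rcases EBaux.idem_eq hirr W.prod hidem with h0 | h1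
    · -- product zero
      rw [hprodW] at h0
      have : π ^ (Multiset.card Wp) = 0 := by
        obtain ⟨v, hv⟩ := hu
        have h3 : ((↑v⁻¹ : Polynomial F ⧸ Ideal.span {p ^ n}) * ↑v) * π ^ (Multiset.card Wp)
            = (↑v⁻¹ : Polynomial F ⧸ Ideal.span {p ^ n}) * 0 := by
          rw [mul_assoc, hv, h0]
        rwa [Units.inv_mul, one_mul, mul_zero] at h3
      exact EBaux.mkp_pow_ne_zero hirr (by omega) this
    · -- product one
      rcases Nat.eq_zero_or_pos (Multiset.card Wp) with hk0 | hkpos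
      · -- all units
        have hWpz : Wp = 0 := Multiset.card_eq_zero.mp hk0
        have hWWu : W = Wu := by rw [← hsplit, hWpz, add_zero]
        have hprod1 : Wu.prod = 1 := by
          rw [hprodW, hk0, pow_zero, mul_one] at h1
          exact h1
        have hWuS₀ : Wu ≤ S₀.map (Units.coeHom (Polynomial F ⧸ Ideal.span {p ^ n})) := by
          rw [Multiset.le_iff_count]
          intro a
          by_cases ha : IsUnit a
          · have hle : Multiset.count a W ≤ Multiset.count a T₁ :=
              Multiset.count_le_of_le a hWle
            rw [hT₁, Multiset.count_add] at hle
            have hrep : Multiset.count a (Multiset.replicate (n - 1) π) = 0 := by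
              rw [Multiset.count_eq_zero]
              intro hmem
              exact hπnu (Multiset.eq_of_mem_replicate hmem ▸ ha)
            have : Multiset.count a Wu ≤ Multiset.count a W :=
              Multiset.count_le_of_le a (Multiset.filter_le _ _)
            omega
          · have : a ∉ Wu := fun hmem => ha (Multiset.of_mem_filter hmem)
            rw [Multiset.count_eq_zero.mpr this]
            exact Nat.zero_le _
        -- lift Wu to units
        let V' : Multiset (Polynomial F ⧸ Ideal.span {p ^ n})ˣ :=
          Wu.attach.map (fun x => (Multiset.of_mem_filter x.2 : IsUnit x.1).unit)
        have hV'map : V'.map (Units.coeHom (Polynomial F ⧸ Ideal.span {p ^ n})) = Wu := by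
          show (Wu.attach.map _).map _ = Wu
          rw [Multiset.map_map]
          simp only [Function.comp_def, Units.coeHom_apply, IsUnit.unit_spec]
          exact Multiset.attach_map_val Wu
        have hinj : Function.Injective
            (Units.coeHom (Polynomial F ⧸ Ideal.span {p ^ n})) := fun _ _ h => Units.ext h
        have hV'le : V' ≤ S₀ := by
          rw [← Multiset.map_le_map_iff hinj, hV'map]
          exact hWuS₀
        have hV'ne : V' ≠ 0 := by
          intro h
          apply hWne
          rw [hWWu, ← hV'map, h, Multiset.map_zero]
        have hV'prod : V'.prod = 1 := by
          apply hinj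
          rw [← Multiset.prod_hom V' (Units.coeHom (Polynomial F ⧸ Ideal.span {p ^ n})),
            hV'map, hprod1]
          simp
        exact hT₀ V' (le_trans hV'le hS₀le) hV'ne hV'prod
      · -- π divides 1
        have : π ∣ W.prod := by
          rw [hprodW]
          exact Dvd.dvd.mul_left (dvd_pow_self π (by omega)) _
        rw [h1] at this
        exact hπnu (isUnit_of_dvd_one this)
  refine ⟨fun T hT => part1 T (le_of_eq hT.symm), ?_⟩
  rw [ErdosBurgess]
  refine le_antisymm ?_ ?_
  · apply sInf_le
    show _ ∈ {ℓ : ℕ∞ | _}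
    rw [Set.mem_setOf_eq]
    intro T hT hfree
    have hcard : D + n - 1 ≤ Multiset.card T := by exact_mod_cast hT
    obtain ⟨T', hT'le, hT'card⟩ := EBaux.exists_le_card T _ hcard
    obtain ⟨W, hWle, hWne, hWidem⟩ := part1 T' (le_of_eq hT'card.symm)
    exact hfree W (le_trans hWle hT'le) hWne hWidem
  · apply le_sInf
    intro ℓ hℓ
    by_contra hlt
    push_neg at hlt
    induction ℓ using ENat.recTopCoe with
    | top => exact (not_top_lt hlt)
    | coe m =>
      have hm : m < D + n - 1 := by exact_mod_cast hlt
      have hmle : (m : ℕ∞) ≤ (Multiset.card T₁ : ℕ∞) := by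
        rw [hT₁card]
        exact_mod_cast (by omega : m ≤ D + n - 2)
      exact hℓ T₁ hmle freeT₁
end

section
/- Let q be a prime power and f = p₁p₂···p_r ∈ F_q[x] a product of pairwise non-associate irreducibles (squarefree), and R = F_q[x]/(f). Then every sequence over the multiplicative semigroup S_R of length D(U(S_R)) contains a nonempty subsequence whose product is an idempotent; consequently I(S_R) = D(U(S_R)). -/
/-- In a finite monoid, some positive power of every element is idempotent. -/
lemma exists_idem_pow {M : Type*} [Monoid M] [Finite M] (a : M) :
    ∃ n, 0 < n ∧ IsIdempotentElem (a ^ n) := by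
  obtain ⟨i, j, hij, hpow⟩ := Finite.exists_ne_map_eq_of_infinite (fun n : ℕ => a ^ n)
  wlog hlt : i < j generalizing i j
  · exact this j i hij.symm hpow.symm (by omega)
  set d := j - i with hd
  have hdpos : 0 < d := by omega
  have hper : ∀ k, i ≤ k → a ^ (k + d) = a ^ k := by
    intro k hk
    have : k + d = (k - i) + j := by omega
    rw [this, pow_add, ← hpow, ← pow_add]
    congr 1; omega
  have hper' : ∀ t k, i ≤ k → a ^ (k + t * d) = a ^ k := by
    intro t
    induction t with
    | zero => simp
    | succ t ih =>
      intro k hk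
      have : k + (t + 1) * d = (k + t * d) + d := by ring
      rw [this, hper _ (by omega), ih k hk]
  refine ⟨(i + 1) * d, by positivity, ?_⟩
  have : (i + 1) * d + (i + 1) * d = (i + 1) * d + ((i+1)) * d := rfl
  unfold IsIdempotentElem
  rw [← pow_add]
  exact hper' (i + 1) ((i + 1) * d) (by nlinarith)

/-- lift a sub-multiset along a map -/
lemma multiset_exists_of_le_map {α β : Type*} {f : α → β} :
    ∀ (s : Multiset α) (t : Multiset β), t ≤ s.map f → ∃ u ≤ s, u.map f = t := by
  classical
  intro s
  induction s using Multiset.induction with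
  | empty =>
    intro t ht
    simp only [Multiset.map_zero, Multiset.le_zero] at ht
    exact ⟨0, le_refl _, by simp [ht]⟩
  | cons a s ih =>
    intro t ht
    rw [Multiset.map_cons] at ht
    by_cases hmem : f a ∈ t
    · have h1 : t.erase (f a) ≤ s.map f := by
        have := Multiset.erase_le_erase (f a) ht
        simpa using this
      obtain ⟨u, hu, hu2⟩ := ih _ h1
      refine ⟨a ::ₘ u, Multiset.cons_le_cons a hu, ?_⟩
      rw [Multiset.map_cons, hu2, Multiset.cons_erase hmem]
    · have h1 : t ≤ s.map f := by
        rw [Multiset.le_iff_count] at ht ⊢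
        intro b
        rcases eq_or_ne b (f a) with rfl | hb
        · simp [Multiset.count_eq_zero_of_notMem hmem]
        · have := ht b
          rwa [Multiset.count_cons_of_ne hb] at this
      obtain ⟨u, hu, hu2⟩ := ih _ h1
      exact ⟨u, hu.trans (Multiset.le_cons_self s a), hu2⟩

/-- extract a sub-multiset of any smaller size -/
lemma multiset_exists_le_card {α : Type*} :
    ∀ (s : Multiset α) (n : ℕ), n ≤ Multiset.card s → ∃ t ≤ s, Multiset.card t = n := by
  intro s
  induction s using Multiset.induction with
  | empty => intro n hn; simp at hn; exact ⟨0, le_refl _, by simp [hn]⟩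
  | cons a s ih =>
    intro n hn
    rcases le_or_gt n (Multiset.card s) with h | h
    · obtain ⟨t, ht, ht2⟩ := ih n h
      exact ⟨t, ht.trans (Multiset.le_cons_self s a), ht2⟩
    · have : n = Multiset.card s + 1 := by simp at hn; omega
      exact ⟨a ::ₘ s, le_refl _, by simp [this]⟩


lemma card_mem_davenport_set {G : Type*} [CommGroup G] [Fintype G] :
    Fintype.card G ∈ {ℓ : ℕ | ∀ T : Multiset G, ℓ ≤ Multiset.card T →
      ∃ W ≤ T, W ≠ 0 ∧ W.prod = 1} := by
  intro T hT
  set l : List G := T.toList with hl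
  have hlen : Fintype.card G ≤ l.length := by
    rwa [← Multiset.coe_card, Multiset.coe_toList]
  obtain ⟨i, j, hij, hpow⟩ := Fintype.exists_ne_map_eq_of_card_lt
    (fun k : Fin (Fintype.card G + 1) => (l.take (k : ℕ)).prod) (by simp)
  wlog hlt : (i : ℕ) < (j : ℕ) generalizing i j
  · refine this j i hij.symm hpow.symm ?_
    rcases Nat.lt_or_ge (j : ℕ) (i : ℕ) with h | h
    · exact h
    · exact absurd (Fin.ext (by omega)) hij
  have hjlen : (j : ℕ) ≤ l.length := le_trans (by omega) hlen
  set w := (l.take (j : ℕ)).drop (i : ℕ) with hw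
  have hsplit : l.take (i : ℕ) ++ w = l.take (j : ℕ) := by
    conv_rhs => rw [← List.take_append_drop (i : ℕ) (l.take (j : ℕ))]
    rw [List.take_take, min_eq_left hlt.le]
  have hw1 : w.prod = 1 := by
    have h := congrArg List.prod hsplit
    rw [List.prod_append] at h
    have h2 : (l.take (i : ℕ)).prod = (l.take (j : ℕ)).prod := hpow
    rw [h2] at h
    exact mul_left_cancel (by rw [h, mul_one])
  refine ⟨(w : Multiset G), ?_, ?_, ?_⟩
  · have hsub : List.Sublist w l := (List.drop_sublist _ _).trans (List.take_sublist _ _)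
    have : (w : Multiset G) ≤ (l : Multiset G) := Multiset.coe_le.mpr hsub.subperm
    rwa [hl, Multiset.coe_toList] at this
  · rw [Ne, Multiset.coe_eq_zero]
    intro h0
    have : w.length = 0 := by rw [h0]; rfl
    rw [hw, List.length_drop, List.length_take, min_eq_left hjlen] at this
    omega
  · rw [Multiset.prod_coe]; exact hw1



lemma exists_unit_mul_idem {R : Type*} [CommRing R] [IsReduced R] [Finite R] (a : R) :
    ∃ (u : Rˣ) (e : R), IsIdempotentElem e ∧ a = ↑u * e := by
  obtain ⟨n, hn, hi⟩ := exists_idem_pow a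
  obtain ⟨e, hedef, he⟩ : ∃ e, a ^ n = e ∧ IsIdempotentElem e := ⟨a ^ n, rfl, hi⟩
  have hmul : e * e = e := he
  have h2n : a ^ (2 * n) = e := by rw [two_mul, pow_add, hedef, hmul]
  have h1e : IsIdempotentElem (1 - e) := he.one_sub
  have hae : a * e = a := by
    have hx : (a * e - a) ^ (2 * n) = 0 := by
      have hfac : (a * e - a) ^ (2 * n) = a ^ (2 * n) * ((e - 1) ^ 2) ^ n := by
        rw [← pow_mul, ← mul_pow]
        congr 1
        ring
      have h2 : (e - 1) ^ 2 = 1 - e := by linear_combination hmul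
      have h3 : (1 - e) ^ n = 1 - e := by
        have := h1e.pow_succ_eq (n - 1)
        rwa [Nat.sub_add_cancel hn] at this
      rw [hfac, h2, h3, h2n]
      linear_combination -hmul
    exact sub_eq_zero.mp (IsNilpotent.eq_zero ⟨2 * n, hx⟩)
  have hpowe : ∀ k, 1 ≤ k → a ^ k * e = a ^ k := by
    intro k hk
    obtain ⟨m, rfl⟩ : ∃ m, k = m + 1 := ⟨k - 1, by omega⟩
    rw [pow_succ, mul_assoc, hae]
  set c := a ^ (2 * n - 1) with hcdef
  have hac : a * c = e := by
    rw [hcdef, ← pow_succ', Nat.sub_add_cancel (by omega), h2n]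
  have hce : c * e = c := hpowe (2 * n - 1) (by omega)
  refine ⟨⟨a + 1 - e, c + 1 - e, ?_, ?_⟩, e, he, ?_⟩
  · linear_combination hac - hae - hce + hmul
  · linear_combination hac - hae - hce + hmul
  · show a = (a + 1 - e) * e
    linear_combination -hae + hmul

lemma davenport_mem {G : Type*} [CommGroup G] [Finite G] :
    Davenport G ∈ {ℓ : ℕ | ∀ T : Multiset G, ℓ ≤ Multiset.card T →
      ∃ W ≤ T, W ≠ 0 ∧ W.prod = 1} := by
  have := Fintype.ofFinite G
  exact Nat.sInf_mem ⟨Fintype.card G, card_mem_davenport_set⟩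

lemma davenport_bound {R : Type*} [CommRing R] [IsReduced R] [Finite R]
    (T : Multiset R) (hT : Davenport Rˣ ≤ Multiset.card T) :
    ∃ W ≤ T, W ≠ 0 ∧ IsIdempotentElem W.prod := by
  choose u e he hue using fun a : R => exists_unit_mul_idem a
  obtain ⟨T', hT'le, hT'card⟩ := multiset_exists_le_card T _ hT
  obtain ⟨V, hVle, hV0, hV1⟩ := davenport_mem (T'.map u)
    (by rw [Multiset.card_map, hT'card])
  obtain ⟨W, hWle, hWmap⟩ := multiset_exists_of_le_map T' V hVle
  refine ⟨W, hWle.trans hT'le, ?_, ?_⟩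
  · rintro rfl
    rw [Multiset.map_zero] at hWmap
    exact hV0 hWmap.symm
  · have hprod : W.prod = (W.map fun a => e a).prod := by
      have h1 : W = W.map (fun a => (↑(u a) : R) * e a) := by
        conv_lhs => rw [← Multiset.map_id W]
        exact Multiset.map_congr rfl fun a _ => hue a
      conv_lhs => rw [h1]
      rw [Multiset.prod_map_mul]
      have h2 : (W.map fun a => (↑(u a) : R)).prod = ((W.map u).prod : R) := by
        have h3 : W.map (fun a => (↑(u a) : R)) = (W.map u).map (Units.coeHom R) := by
          rw [Multiset.map_map]
          rfl
        rw [h3, Multiset.prod_hom]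
        rfl
      rw [h2, hWmap, hV1, Units.val_one, one_mul]
    rw [hprod]
    refine Multiset.prod_induction _ _
      (fun x y hx hy => hx.mul_of_commute (mul_comm x y) hy) IsIdempotentElem.one ?_
    intro x hx
    obtain ⟨a, _, rfl⟩ := Multiset.mem_map.mp hx
    exact he a

/-- for squarefree f = p₁⋯p_r, every sequence over R = F_q[x]/(f) of length
D(U(R)) has a nonempty subsequence with idempotent product, and I(S_R) = D(U(S_R)). -/
theorem erdosBurgess_squarefree
    (F : Type*) [Field F] [Fintype F]
    (r : ℕ) (hr : 1 ≤ r)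
    (p : Fin r → Polynomial F)
    (hirr : ∀ i, Irreducible (p i))
    (hass : ∀ i j, i ≠ j → ¬ Associated (p i) (p j))
    (f : Polynomial F) (hf : f = ∏ i, p i) :
    (∀ T : Multiset (Polynomial F ⧸ Ideal.span {f}),
      Multiset.card T = Davenport (Polynomial F ⧸ Ideal.span {f})ˣ →
      ∃ W ≤ T, W ≠ 0 ∧ IsIdempotentElem W.prod) ∧
    ErdosBurgess (Polynomial F ⧸ Ideal.span {f}) =
      ((Davenport (Polynomial F ⧸ Ideal.span {f})ˣ : ℕ) : ℕ∞) := by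
  have hf0 : f ≠ 0 := by
    rw [hf]
    exact Finset.prod_ne_zero_iff.mpr fun i _ => (hirr i).ne_zero
  have hsf : Squarefree f := by
    have key : ∀ s : Finset (Fin r), Squarefree (∏ i ∈ s, p i) := by
      intro s
      induction s using Finset.induction with
      | empty => simpa using squarefree_one
      | @insert a s ha ih =>
        rw [Finset.prod_insert ha]
        refine squarefree_mul_iff.mpr ⟨?_, (hirr a).squarefree, ih⟩
        refine ((hirr a).isRelPrime_iff_not_dvd).mpr ?_
        intro hdvd
        obtain ⟨j, hj, hdj⟩ := (hirr a).prime.exists_mem_finset_dvd hdvd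
        exact hass a j (fun h => ha (h ▸ hj))
          ((hirr a).associated_of_dvd (hirr j) hdj)
    rw [hf]
    exact key Finset.univ
  haveI hred : IsReduced (Polynomial F ⧸ Ideal.span {f}) := by
    refine (RingHom.ker_isRadical_iff_reduced_of_surjective
      (Ideal.Quotient.mk_surjective (I := Ideal.span {f}))).mp ?_
    rw [Ideal.mk_ker]
    exact isRadical_iff_span_singleton.mp hsf.isRadical
  haveI hfin : Finite (Polynomial F ⧸ Ideal.span {f}) := by
    have pb : PowerBasis F (AdjoinRoot f) := AdjoinRoot.powerBasis hf0
    have : Finite (AdjoinRoot f) := Finite.of_equiv _ pb.basis.equivFun.toEquiv.symm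
    exact this
  constructor
  · intro T hcard
    exact davenport_bound T (le_of_eq hcard.symm)
  · apply le_antisymm
    · apply sInf_le
      intro T hT hfree
      have hT' : Davenport (Polynomial F ⧸ Ideal.span {f})ˣ ≤ Multiset.card T := by
        exact_mod_cast hT
      obtain ⟨W, h1, h2, h3⟩ := davenport_bound T hT'
      exact hfree W h1 h2 h3
    · apply le_sInf
      intro ℓ hℓ
      by_contra hlt
      push_neg at hlt
      lift ℓ to ℕ using (hlt.trans (WithTop.coe_lt_top _)).ne
      have hnD : ℓ < Davenport (Polynomial F ⧸ Ideal.span {f})ˣ := by exact_mod_cast hlt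
      have hnot : ℓ ∉ {ℓ' : ℕ | ∀ T : Multiset (Polynomial F ⧸ Ideal.span {f})ˣ,
          ℓ' ≤ Multiset.card T → ∃ W ≤ T, W ≠ 0 ∧ W.prod = 1} :=
        Nat.notMem_of_lt_sInf hnD
      simp only [Set.mem_setOf_eq, not_forall] at hnot
      push_neg at hnot
      obtain ⟨U, hUcard, hU⟩ := hnot
      have hmem := hℓ (U.map Units.val) (by rw [Multiset.card_map]; exact_mod_cast hUcard)
      unfold IdemProdFree at hmem
      push_neg at hmem
      obtain ⟨W, hWle, hW0, hWidem⟩ := hmem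
      obtain ⟨V, hVle, hVmap⟩ := multiset_exists_of_le_map U W hWle
      have hV0 : V ≠ 0 := by
        rintro rfl
        rw [Multiset.map_zero] at hVmap
        exact hW0 hVmap.symm
      have hVprod : ((V.prod : (Polynomial F ⧸ Ideal.span {f})ˣ) : Polynomial F ⧸ Ideal.span {f})
          = W.prod := by
        rw [← hVmap]
        have h3 : V.map Units.val = V.map (Units.coeHom (Polynomial F ⧸ Ideal.span {f})) := rfl
        rw [h3, Multiset.prod_hom V (Units.coeHom _)]
        rfl
      have hV1 : V.prod = 1 := by
        have h2 : V.prod * V.prod = V.prod := by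
          apply Units.ext
          rw [Units.val_mul, hVprod]
          exact hWidem
        exact mul_left_cancel (h2.trans (mul_one _).symm)
      exact hU V hVle hV0 hV1
end
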